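/- For every α ∈ ℝ≥0∞ with α ≥ 1 (including α = ∞), there exists a factorizable Boolean sublattice S whose elasticity satisfies ρ(S) = α. -/

import Mathlib

open scoped ENNReal

/-- A Boolean sublattice: a set of finite subsets of `ℕ` that contains `∅` and is
closed under binary unions (ordered by inclusion, with joins given by unions). -/
def IsBSL (S : Set (Finset ℕ)) : Prop :=
  ∅ ∈ S ∧ ∀ A ∈ S, ∀ B ∈ S, A ∪ B ∈ S

/-- A quark of `S`: a nonempty element of `S` covering `∅` in `S`, i.e. there is no
`B ∈ S` with `∅ ⊊ B ⊊ A`. -/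
def IsQuark (S : Set (Finset ℕ)) (A : Finset ℕ) : Prop :=
  A ∈ S ∧ A ≠ ∅ ∧ ∀ B ∈ S, B ≠ ∅ → ¬ B ⊂ A

/-- `z` is a factorization of `X` into quarks of `S`: a finite set of quarks whose
union is `X` such that no proper subset of `z` has union `X`. -/
def IsFactorization (S : Set (Finset ℕ)) (X : Finset ℕ) (z : Finset (Finset ℕ)) : Prop :=
  (∀ A ∈ z, IsQuark S A) ∧ z.sup id = X ∧ ∀ w, w ⊂ z → w.sup id ≠ X

/-- The set `Z(X)` of factorizations of `X` in `S`. -/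
def Factorizations (S : Set (Finset ℕ)) (X : Finset ℕ) : Set (Finset (Finset ℕ)) :=
  {z | IsFactorization S X z}

/-- `S` is factorizable: every nonempty element of `S` has a factorization. -/
def Factorizable (S : Set (Finset ℕ)) : Prop :=
  ∀ X ∈ S, X ≠ ∅ → (Factorizations S X).Nonempty

/-- `S` is a unique factorization semilattice: every nonempty element of `S` has
exactly one factorization. -/
def IsUFS (S : Set (Finset ℕ)) : Prop :=
  ∀ X ∈ S, X ≠ ∅ → ∃! z, z ∈ Factorizations S X

/-- `S` is a half-factorial semilattice: for every nonempty `X ∈ S` the set of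
factorization lengths of `X` is a singleton. -/
def IsHFS (S : Set (Finset ℕ)) : Prop :=
  ∀ X ∈ S, X ≠ ∅ → (Factorizations S X).Nonempty ∧
    ∀ z ∈ Factorizations S X, ∀ z' ∈ Factorizations S X, z.card = z'.card

/-- `S` is a length-factorial semilattice: two distinct factorizations of the same
nonempty element of `S` have different cardinalities. -/
def IsLFS (S : Set (Finset ℕ)) : Prop :=
  ∀ X ∈ S, X ≠ ∅ → ∀ z ∈ Factorizations S X, ∀ z' ∈ Factorizations S X,
    z.card = z'.card → z = z'

/-- The Boolean sublattice generated by a collection `𝒜` of finite subsets of `ℕ`: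
the smallest set of finite subsets of `ℕ` containing `{∅} ∪ 𝒜` and closed under
binary unions. -/
def genBSL (𝒜 : Set (Finset ℕ)) : Set (Finset ℕ) :=
  ⋂₀ {T | IsBSL T ∧ 𝒜 ⊆ T}

/-- An isolated quark: a quark disjoint from every other quark of `S`. -/
def IsIsolatedQuark (S : Set (Finset ℕ)) (A : Finset ℕ) : Prop :=
  IsQuark S A ∧ ∀ B, IsQuark S B → B ≠ A → Disjoint A B

/-- An excess quark: a quark each of whose elements belongs to some other quark. -/
def IsExcessQuark (S : Set (Finset ℕ)) (A : Finset ℕ) : Prop :=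
  IsQuark S A ∧ ∀ j ∈ A, ∃ B, IsQuark S B ∧ B ≠ A ∧ j ∈ B

/-- The quarkic graph of `S`: vertices are the quarks of `S`, with an edge between
distinct quarks having nonempty intersection. -/
def quarkicGraph (S : Set (Finset ℕ)) : SimpleGraph {A : Finset ℕ // IsQuark S A} :=
  SimpleGraph.fromRel (fun A B => ((A : Finset ℕ) ∩ (B : Finset ℕ)).Nonempty)

/-- The vertex set `V(C)` of a connected component of the quarkic graph, as a set of
finite subsets of `ℕ`. -/
def compVerts (S : Set (Finset ℕ)) (C : (quarkicGraph S).ConnectedComponent) :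
    Set (Finset ℕ) :=
  Subtype.val '' C.supp

/-- The pairing graph of `S` (for `S` with quarks of size at most 2): vertices are `ℕ`,
with an edge between distinct `a`, `b` whenever `{a, b}` is a quark of `S`. -/
def pairingGraph (S : Set (Finset ℕ)) : SimpleGraph ℕ :=
  SimpleGraph.fromRel (fun a b => IsQuark S {a, b})

/-- The edge set of a connected component `C` of the pairing graph, each edge `{a,b}`
regarded as the 2-element subset `{a, b}` of `ℕ`. -/
def compEdgeSets (S : Set (Finset ℕ)) (C : (pairingGraph S).ConnectedComponent) :
    Set (Finset ℕ) :=
  {A | ∃ a b : ℕ, (pairingGraph S).Adj a b ∧ a ∈ C.supp ∧ A = {a, b}}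

/-- `v` has degree at least `n` in `G` (valid also for infinite graphs). -/
def DegAtLeast {V : Type*} (G : SimpleGraph V) (v : V) (n : ℕ) : Prop :=
  ∃ s : Finset V, s.card = n ∧ ∀ u ∈ s, G.Adj v u

/-- `v` has degree exactly `n` in `G`: its neighbor set is a finite set of size `n`. -/
def DegExactly {V : Type*} (G : SimpleGraph V) (v : V) (n : ℕ) : Prop :=
  ∃ s : Finset V, s.card = n ∧ ∀ u, G.Adj v u ↔ u ∈ s

/-- A leaf: a vertex of degree exactly 1. -/
def IsLeaf {V : Type*} (G : SimpleGraph V) (v : V) : Prop := DegExactly G v 1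

/-- A candy graph: a connected simple graph of diameter at most 4 that contains a
cycle of length `k` if and only if `k = 4`. -/
def IsCandy {V : Type*} (G : SimpleGraph V) : Prop :=
  G.Connected ∧
  (∀ u v : V, ∃ p : G.Walk u v, p.length ≤ 4) ∧
  (∀ k : ℕ, (∃ (v : V) (c : G.Walk v v), c.IsCycle ∧ c.length = k) ↔ k = 4)

/-- The connected component `C` of `G` contains no cycle. -/
def CompAcyclic {V : Type*} (G : SimpleGraph V) (C : G.ConnectedComponent) : Prop :=
  ∀ v ∈ C.supp, ∀ c : G.Walk v v, ¬ c.IsCycle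

/-- Every path inside the connected component `C` has length at most `d` (for a tree
component this says its diameter is at most `d`). -/
def CompDiamLe {V : Type*} (G : SimpleGraph V) (C : G.ConnectedComponent) (d : ℕ) : Prop :=
  ∀ (u v : V), u ∈ C.supp → ∀ p : G.Walk u v, p.IsPath → p.length ≤ d

/-- The connected component `C` of `G` is (as an induced subgraph) the cycle graph on
`n` vertices. -/
def CompIsCycleGraph {V : Type*} (G : SimpleGraph V) (C : G.ConnectedComponent)
    (n : ℕ) : Prop :=
  ∃ v : Fin n → V, Function.Injective v ∧ C.supp = Set.range v ∧
    ∀ i j : Fin n, G.Adj (v i) (v j) ↔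
      ((j : ℕ) = ((i : ℕ) + 1) % n ∨ (i : ℕ) = ((j : ℕ) + 1) % n)

/-- The connected component `C` of `G` is (as an induced subgraph) a candy graph:
it has diameter at most 4 and contains a cycle of length `k` iff `k = 4`. -/
def CompIsCandy {V : Type*} (G : SimpleGraph V) (C : G.ConnectedComponent) : Prop :=
  (∀ u v, u ∈ C.supp → v ∈ C.supp → ∃ p : G.Walk u v, p.length ≤ 4) ∧
  (∀ k : ℕ, (∃ v ∈ C.supp, ∃ c : G.Walk v v, c.IsCycle ∧ c.length = k) ↔ k = 4)

/-- The set of factorization lengths `L(X)` of `X` in `S`. -/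
def lengthsOf (S : Set (Finset ℕ)) (X : Finset ℕ) : Set ℕ :=
  Finset.card '' Factorizations S X

/-- The elasticity `ρ(X) = sup L(X) / min L(X)` of a nonempty element `X` of `S`,
valued in the extended nonnegative reals. -/
noncomputable def elasticityOf (S : Set (Finset ℕ)) (X : Finset ℕ) : ℝ≥0∞ :=
  (⨆ n ∈ lengthsOf S X, (n : ℝ≥0∞)) / ((sInf (lengthsOf S X) : ℕ) : ℝ≥0∞)

/-- The elasticity `ρ(S)` of a Boolean sublattice `S`. -/
noncomputable def elasticity (S : Set (Finset ℕ)) : ℝ≥0∞ :=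
  ⨆ X ∈ {X | X ∈ S ∧ X ≠ ∅}, elasticityOf S X

set_option linter.unusedSectionVars false

namespace Stmt16

/-- the cell in grid `n`, row `i`, column `j`, coded as a natural number. -/
def cell (n i j : ℕ) : ℕ := Nat.pair n (Nat.pair i j)

lemma cell_inj {n i j n' i' j' : ℕ} (h : cell n i j = cell n' i' j') :
    n = n' ∧ i = i' ∧ j = j' := by
  unfold cell at h
  have h1 := congrArg Nat.unpair h
  simp [Nat.unpair_pair] at h1
  obtain ⟨h1, h2⟩ := h1
  exact ⟨h1, h2⟩

/-- the grid index of a coded cell. -/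
def gIdx (x : ℕ) : ℕ := x.unpair.1

@[simp] lemma gIdx_cell (n i j : ℕ) : gIdx (cell n i j) = n := by
  simp [gIdx, cell]

variable (a b : ℕ → ℕ)

def Row (n i : ℕ) : Finset ℕ := (Finset.range (b n)).image (fun j => cell n i j)

def Col (n j : ℕ) : Finset ℕ := (Finset.range (a n)).image (fun i => cell n i j)

def Grid (n : ℕ) : Finset ℕ :=
  ((Finset.range (a n)) ×ˢ (Finset.range (b n))).image (fun p => cell n p.1 p.2)

lemma mem_Row {x n i : ℕ} : x ∈ Row b n i ↔ ∃ j, j < b n ∧ x = cell n i j := by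
  simp [Row, eq_comm]

lemma mem_Col {x n j : ℕ} : x ∈ Col a n j ↔ ∃ i, i < a n ∧ x = cell n i j := by
  simp [Col, eq_comm]

lemma mem_Grid {x n : ℕ} : x ∈ Grid a b n ↔ ∃ i j, i < a n ∧ j < b n ∧ x = cell n i j := by
  simp [Grid, eq_comm]
  tauto

/-- the quark collection: all rows and columns of all grids. -/
def Q : Set (Finset ℕ) :=
  {A | ∃ n i, i < a n ∧ A = Row b n i} ∪ {A | ∃ n j, j < b n ∧ A = Col a n j}

/-- the Boolean sublattice: all finite unions of quarks. -/
def S : Set (Finset ℕ) :=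
  {X | ∃ z : Finset (Finset ℕ), (∀ A ∈ z, A ∈ Q a b) ∧ z.sup id = X}

variable {a b}

section Basic
variable (ha : ∀ n, 2 ≤ a n) (hab : ∀ n, a n ≤ b n)
include ha hab

lemma btwo (n : ℕ) : 2 ≤ b n := le_trans (ha n) (hab n)

lemma Row_nonempty (n i : ℕ) : (Row b n i).Nonempty :=
  ⟨cell n i 0, (mem_Row b).2 ⟨0, by have := btwo ha hab n; omega, rfl⟩⟩

lemma Col_nonempty (n j : ℕ) : (Col a n j).Nonempty :=
  ⟨cell n 0 j, (mem_Col a).2 ⟨0, by have := ha n; omega, rfl⟩⟩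

lemma quark_nonempty {A : Finset ℕ} (hA : A ∈ Q a b) : A.Nonempty := by
  rcases hA with ⟨n, i, _, rfl⟩ | ⟨n, j, _, rfl⟩
  · exact Row_nonempty ha hab n i
  · exact Col_nonempty ha hab n j

omit ha hab in
lemma gIdx_of_mem_Row {x n i : ℕ} (h : x ∈ Row b n i) : gIdx x = n := by
  obtain ⟨j, _, rfl⟩ := (mem_Row b).1 h; simp

omit ha hab in
lemma gIdx_of_mem_Col {x n j : ℕ} (h : x ∈ Col a n j) : gIdx x = n := by
  obtain ⟨i, _, rfl⟩ := (mem_Col a).1 h; simp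

lemma Row_ne_Col {n i n' j : ℕ} : Row b n i ≠ Col a n' j := by
  intro h
  have h0 : cell n i 0 ∈ Col a n' j := h ▸ (mem_Row b).2 ⟨0, by have := btwo ha hab n; omega, rfl⟩
  have h1 : cell n i 1 ∈ Col a n' j := h ▸ (mem_Row b).2 ⟨1, by have := btwo ha hab n; omega, rfl⟩
  obtain ⟨i0, _, hc0⟩ := (mem_Col a).1 h0
  obtain ⟨i1, _, hc1⟩ := (mem_Col a).1 h1
  obtain ⟨-, -, hj0⟩ := cell_inj hc0
  obtain ⟨-, -, hj1⟩ := cell_inj hc1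
  omega

/-- the quark collection is an antichain. -/
lemma quark_antichain {A B : Finset ℕ} (hA : A ∈ Q a b) (hB : B ∈ Q a b) (hAB : A ⊆ B) :
    A = B := by
  rcases hA with ⟨n, i, hi, rfl⟩ | ⟨n, j, hj, rfl⟩ <;>
    rcases hB with ⟨n', i', hi', rfl⟩ | ⟨n', j', hj', rfl⟩
  · have h0 := (mem_Row b).1 (hAB ((mem_Row b).2 ⟨0, by have := btwo ha hab n; omega, rfl⟩))
    obtain ⟨j0, _, hc⟩ := h0
    obtain ⟨rfl, rfl, -⟩ := cell_inj hc
    rfl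
  · exact absurd (by
      have h0 : cell n i 0 ∈ Col a n' j' := hAB ((mem_Row b).2 ⟨0, by have := btwo ha hab n; omega, rfl⟩)
      have h1 : cell n i 1 ∈ Col a n' j' := hAB ((mem_Row b).2 ⟨1, by have := btwo ha hab n; omega, rfl⟩)
      obtain ⟨i0, _, hc0⟩ := (mem_Col a).1 h0
      obtain ⟨i1, _, hc1⟩ := (mem_Col a).1 h1
      obtain ⟨-, -, hj0⟩ := cell_inj hc0
      obtain ⟨-, -, hj1⟩ := cell_inj hc1
      omega : False) (fun h => h)
  · exact absurd (by
      have h0 : cell n 0 j ∈ Row b n' i' := hAB ((mem_Col a).2 ⟨0, by have := ha n; omega, rfl⟩)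
      have h1 : cell n 1 j ∈ Row b n' i' := hAB ((mem_Col a).2 ⟨1, by have := ha n; omega, rfl⟩)
      obtain ⟨j0, _, hc0⟩ := (mem_Row b).1 h0
      obtain ⟨j1, _, hc1⟩ := (mem_Row b).1 h1
      obtain ⟨-, hi0, -⟩ := cell_inj hc0
      obtain ⟨-, hi1, -⟩ := cell_inj hc1
      omega : False) (fun h => h)
  · have h0 := (mem_Col a).1 (hAB ((mem_Col a).2 ⟨0, by have := ha n; omega, rfl⟩))
    obtain ⟨i0, _, hc⟩ := h0
    obtain ⟨rfl, -, rfl⟩ := cell_inj hc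
    rfl

omit ha hab in
lemma isBSL_S : IsBSL (S a b) := by
  constructor
  · exact ⟨∅, by simp⟩
  · rintro A ⟨z, hz, rfl⟩ B ⟨w, hw, rfl⟩
    refine ⟨z ∪ w, fun C hC => ?_, ?_⟩
    · rcases Finset.mem_union.1 hC with h | h
      · exact hz C h
      · exact hw C h
    · rw [Finset.sup_union]; rfl

omit ha hab in
lemma quark_mem_S {A : Finset ℕ} (hA : A ∈ Q a b) : A ∈ S a b :=
  ⟨{A}, by simpa using hA, by simp⟩

omit ha hab in
lemma exists_quark_of_mem_S {X : Finset ℕ} (hX : X ∈ S a b) {x : ℕ} (hx : x ∈ X) :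
    ∃ A ∈ Q a b, x ∈ A ∧ A ⊆ X := by
  obtain ⟨z, hz, rfl⟩ := hX
  obtain ⟨A, hAz, hxA⟩ := Finset.mem_sup.1 hx
  exact ⟨A, hz A hAz, hxA, Finset.le_sup (f := id) hAz⟩

lemma isQuark_iff {A : Finset ℕ} : IsQuark (S a b) A ↔ A ∈ Q a b := by
  constructor
  · rintro ⟨hAS, hAne, hmin⟩
    obtain ⟨x, hx⟩ := Finset.nonempty_iff_ne_empty.2 hAne
    obtain ⟨A', hA', hxA', hsub⟩ := exists_quark_of_mem_S hAS hx
    rcases eq_or_lt_of_le (Finset.le_iff_subset.2 hsub) with h | h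
    · exact h ▸ hA'
    · exact absurd h (hmin A' (quark_mem_S hA')
        (Finset.nonempty_iff_ne_empty.1 (quark_nonempty ha hab hA')))
  · intro hA
    refine ⟨quark_mem_S hA, Finset.nonempty_iff_ne_empty.1 (quark_nonempty ha hab hA),
      fun B hBS hBne hBA => ?_⟩
    obtain ⟨x, hx⟩ := Finset.nonempty_iff_ne_empty.2 hBne
    obtain ⟨A', hA', hxA', hsub⟩ := exists_quark_of_mem_S hBS hx
    have hAA : A' = A := quark_antichain ha hab hA' hA (hsub.trans hBA.subset)
    exact hBA.not_subset (hAA ▸ hsub)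

end Basic

/-- the grid index of a quark. -/
def qidx (A : Finset ℕ) : ℕ := A.sup gIdx

section PerGrid
variable (ha : ∀ n, 2 ≤ a n) (hab : ∀ n, a n ≤ b n)
include ha hab

lemma qidx_Row (n i : ℕ) : qidx (Row b n i) = n := by
  have : ∀ x ∈ Row b n i, gIdx x = n := fun x hx => gIdx_of_mem_Row hx
  have hne := Row_nonempty ha hab (b := b) n i
  apply le_antisymm
  · exact Finset.sup_le fun x hx => (this x hx).le
  · obtain ⟨x, hx⟩ := hne
    exact le_trans (this x hx).ge (Finset.le_sup hx)

lemma qidx_Col (n j : ℕ) : qidx (Col a n j) = n := by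
  have : ∀ x ∈ Col a n j, gIdx x = n := fun x hx => gIdx_of_mem_Col hx
  have hne := Col_nonempty ha hab (a := a) n j
  apply le_antisymm
  · exact Finset.sup_le fun x hx => (this x hx).le
  · obtain ⟨x, hx⟩ := hne
    exact le_trans (this x hx).ge (Finset.le_sup hx)

lemma quark_of_qidx {A : Finset ℕ} {n : ℕ} (hA : A ∈ Q a b) (hq : qidx A = n) :
    (∃ i, i < a n ∧ A = Row b n i) ∨ (∃ j, j < b n ∧ A = Col a n j) := by
  rcases hA with ⟨n', i, hi, rfl⟩ | ⟨n', j, hj, rfl⟩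
  · rw [qidx_Row ha hab] at hq; subst hq; exact Or.inl ⟨i, hi, rfl⟩
  · rw [qidx_Col ha hab] at hq; subst hq; exact Or.inr ⟨j, hj, rfl⟩

omit ha hab in
lemma Row_subset_Grid {n i : ℕ} (hi : i < a n) : Row b n i ⊆ Grid a b n := by
  intro x hx
  obtain ⟨j, hj, rfl⟩ := (mem_Row b).1 hx
  exact (mem_Grid a b).2 ⟨i, j, hi, hj, rfl⟩

omit ha hab in
lemma Col_subset_Grid {n j : ℕ} (hj : j < b n) : Col a n j ⊆ Grid a b n := by
  intro x hx
  obtain ⟨i, hi, rfl⟩ := (mem_Col a).1 hx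
  exact (mem_Grid a b).2 ⟨i, j, hi, hj, rfl⟩

omit ha hab in
lemma grid_sub_of_rows {n : ℕ} {X : Finset ℕ} (h : ∀ i, i < a n → Row b n i ⊆ X) :
    Grid a b n ⊆ X := by
  intro x hx
  obtain ⟨i, j, hi, hj, rfl⟩ := (mem_Grid a b).1 hx
  exact h i hi ((mem_Row b).2 ⟨j, hj, rfl⟩)

omit ha hab in
lemma grid_sub_of_cols {n : ℕ} {X : Finset ℕ} (h : ∀ j, j < b n → Col a n j ⊆ X) :
    Grid a b n ⊆ X := by
  intro x hx
  obtain ⟨i, j, hi, hj, rfl⟩ := (mem_Grid a b).1 hx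
  exact h j hj ((mem_Col a).2 ⟨i, hi, rfl⟩)

end PerGrid

variable (a b) in
/-- indices of full rows of grid `n` inside `X`. -/
def Rset (X : Finset ℕ) (n : ℕ) : Finset ℕ :=
  (Finset.range (a n)).filter (fun i => Row b n i ⊆ X)

variable (a b) in
/-- indices of full columns of grid `n` inside `X`. -/
def Cset (X : Finset ℕ) (n : ℕ) : Finset ℕ :=
  (Finset.range (b n)).filter (fun j => Col a n j ⊆ X)

/-- the set of grid indices meeting `X`. -/
def NX (X : Finset ℕ) : Finset ℕ := X.image gIdx

variable (a b) in
/-- the minimal per-grid cover cardinality. -/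
def mcard (X : Finset ℕ) (n : ℕ) : ℕ :=
  if Grid a b n ⊆ X then a n else (Rset a b X n).card + (Cset a b X n).card

variable (a b) in
/-- the maximal per-grid cover cardinality. -/
def Mcard (X : Finset ℕ) (n : ℕ) : ℕ :=
  if Grid a b n ⊆ X then b n else (Rset a b X n).card + (Cset a b X n).card

section Cover

variable (ha : ∀ n, 2 ≤ a n) (hab : ∀ n, a n ≤ b n)
  {X : Finset ℕ} {z : Finset (Finset ℕ)}
  (hq : ∀ A ∈ z, A ∈ Q a b) (hsup : z.sup id = X)
include ha hab hq hsup

omit ha hab hq in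
lemma sub_of_mem_z {A : Finset ℕ} (hA : A ∈ z) : A ⊆ X :=
  hsup ▸ Finset.le_sup (f := id) hA

omit ha hab hq in
lemma cover_of_mem {x : ℕ} (hx : x ∈ X) : ∃ A ∈ z, x ∈ A :=
  Finset.mem_sup.1 (hsup ▸ hx)

/-- classification of the quarks of `z` with grid index `n`. -/
lemma zn_classify {n : ℕ} {A : Finset ℕ} (hA : A ∈ z.filter (fun A => qidx A = n)) :
    (∃ i, i ∈ Rset a b X n ∧ A = Row b n i) ∨ (∃ j, j ∈ Cset a b X n ∧ A = Col a n j) := by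
  rw [Finset.mem_filter] at hA
  obtain ⟨hAz, hqi⟩ := hA
  have hsub : A ⊆ X := sub_of_mem_z hsup hAz
  rcases quark_of_qidx ha hab (hq A hAz) hqi with ⟨i, hi, rfl⟩ | ⟨j, hj, rfl⟩
  · exact Or.inl ⟨i, Finset.mem_filter.2 ⟨Finset.mem_range.2 hi, hsub⟩, rfl⟩
  · exact Or.inr ⟨j, Finset.mem_filter.2 ⟨Finset.mem_range.2 hj, hsub⟩, rfl⟩

/-- cells of `X` in grid `n` are covered by quarks of grid index `n`. -/
lemma zn_cover {n : ℕ} {x : ℕ} (hx : x ∈ X) (hgx : gIdx x = n) :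
    ∃ A ∈ z.filter (fun A => qidx A = n), x ∈ A := by
  obtain ⟨A, hAz, hxA⟩ := cover_of_mem hsup hx
  refine ⟨A, Finset.mem_filter.2 ⟨hAz, ?_⟩, hxA⟩
  rcases hq A hAz with ⟨n', i, hi, rfl⟩ | ⟨n', j, hj, rfl⟩
  · rw [qidx_Row ha hab, ← hgx, gIdx_of_mem_Row hxA]
  · rw [qidx_Col ha hab, ← hgx, gIdx_of_mem_Col hxA]

/-- in the non-full case, the full rows of `X` in grid `n` must appear in `z`. -/
lemma rows_mem_zn {n : ℕ} (hfull : ¬ Grid a b n ⊆ X) {i : ℕ} (hi : i ∈ Rset a b X n) :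
    Row b n i ∈ z.filter (fun A => qidx A = n) := by
  rw [Rset, Finset.mem_filter, Finset.mem_range] at hi
  obtain ⟨hi, hisub⟩ := hi
  have hj0 : ∃ j0, j0 < b n ∧ ¬ Col a n j0 ⊆ X := by
    by_contra h
    push_neg at h
    exact hfull (grid_sub_of_cols fun j hj => h j hj)
  obtain ⟨j0, hj0, hj0X⟩ := hj0
  have hx : cell n i j0 ∈ X := hisub ((mem_Row b).2 ⟨j0, hj0, rfl⟩)
  obtain ⟨A, hAzn, hxA⟩ := zn_cover ha hab hq hsup (n := n) hx (by simp)
  rcases zn_classify ha hab hq hsup hAzn with ⟨i', hi', rfl⟩ | ⟨j', hj', rfl⟩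
  · obtain ⟨j'', _, hc⟩ := (mem_Row b).1 hxA
    obtain ⟨-, rfl, -⟩ := cell_inj hc
    exact hAzn
  · obtain ⟨i'', _, hc⟩ := (mem_Col a).1 hxA
    obtain ⟨-, -, rfl⟩ := cell_inj hc
    rw [Cset, Finset.mem_filter] at hj'
    exact absurd hj'.2 hj0X

lemma cols_mem_zn {n : ℕ} (hfull : ¬ Grid a b n ⊆ X) {j : ℕ} (hj : j ∈ Cset a b X n) :
    Col a n j ∈ z.filter (fun A => qidx A = n) := by
  rw [Cset, Finset.mem_filter, Finset.mem_range] at hj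
  obtain ⟨hj, hjsub⟩ := hj
  have hi0 : ∃ i0, i0 < a n ∧ ¬ Row b n i0 ⊆ X := by
    by_contra h
    push_neg at h
    exact hfull (grid_sub_of_rows fun i hi => h i hi)
  obtain ⟨i0, hi0, hi0X⟩ := hi0
  have hx : cell n i0 j ∈ X := hjsub ((mem_Col a).2 ⟨i0, hi0, rfl⟩)
  obtain ⟨A, hAzn, hxA⟩ := zn_cover ha hab hq hsup (n := n) hx (by simp)
  rcases zn_classify ha hab hq hsup hAzn with ⟨i', hi', rfl⟩ | ⟨j', hj', rfl⟩
  · obtain ⟨j'', _, hc⟩ := (mem_Row b).1 hxA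
    obtain ⟨-, rfl, -⟩ := cell_inj hc
    rw [Rset, Finset.mem_filter] at hi'
    exact absurd hi'.2 hi0X
  · obtain ⟨i'', _, hc⟩ := (mem_Col a).1 hxA
    obtain ⟨-, -, rfl⟩ := cell_inj hc
    exact hAzn

/-- in the non-full case, `z`'s grid-`n` part is exactly rows over `Rset` and cols over `Cset`. -/
lemma zn_eq_nonfull {n : ℕ} (hfull : ¬ Grid a b n ⊆ X) :
    z.filter (fun A => qidx A = n) =
      (Rset a b X n).image (Row b n) ∪ (Cset a b X n).image (Col a n) := by
  apply Finset.Subset.antisymm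
  · intro A hA
    rcases zn_classify ha hab hq hsup hA with ⟨i, hi, rfl⟩ | ⟨j, hj, rfl⟩
    · exact Finset.mem_union_left _ (Finset.mem_image_of_mem _ hi)
    · exact Finset.mem_union_right _ (Finset.mem_image_of_mem _ hj)
  · intro A hA
    rcases Finset.mem_union.1 hA with h | h
    · obtain ⟨i, hi, rfl⟩ := Finset.mem_image.1 h
      exact rows_mem_zn ha hab hq hsup hfull hi
    · obtain ⟨j, hj, rfl⟩ := Finset.mem_image.1 h
      exact cols_mem_zn ha hab hq hsup hfull hj

end Cover

section Cover2

variable (ha : ∀ n, 2 ≤ a n) (hab : ∀ n, a n ≤ b n)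
  {X : Finset ℕ} {z : Finset (Finset ℕ)}
  (hq : ∀ A ∈ z, A ∈ Q a b) (hsup : z.sup id = X)
  (hmin : ∀ w, w ⊂ z → w.sup id ≠ X)
include ha hab hq hsup hmin

/-- in the full case, `z`'s grid-`n` part is all rows or all columns. -/
lemma zn_eq_full {n : ℕ} (hfull : Grid a b n ⊆ X) :
    z.filter (fun A => qidx A = n) = (Finset.range (a n)).image (Row b n) ∨
      z.filter (fun A => qidx A = n) = (Finset.range (b n)).image (Col a n) := by
  set zn := z.filter (fun A => qidx A = n) with hzn
  by_cases hrows : ∀ i, i < a n → Row b n i ∈ zn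
  · left
    apply Finset.Subset.antisymm
    · intro A hA
      rcases zn_classify ha hab hq hsup hA with ⟨i, hi, rfl⟩ | ⟨j, hj, rfl⟩
      · rw [Rset, Finset.mem_filter] at hi
        exact Finset.mem_image_of_mem _ hi.1
      · -- a column occurs in `zn` together with all rows: contradicts minimality
        exfalso
        rw [Cset, Finset.mem_filter, Finset.mem_range] at hj
        have hcz : Col a n j ∈ z := (Finset.mem_filter.1 hA).1
        have hw : z.erase (Col a n j) ⊂ z := Finset.erase_ssubset hcz
        apply hmin _ hw
        apply le_antisymm
        · exact hsup ▸ Finset.sup_mono (Finset.erase_subset _ _)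
        · intro x hx
          obtain ⟨A', hA'z, hxA'⟩ := cover_of_mem hsup hx
          by_cases hAe : A' = Col a n j
          · subst hAe
            obtain ⟨i', hi', rfl⟩ := (mem_Col a).1 hxA'
            have hrz : Row b n i' ∈ z := (Finset.mem_filter.1 (hrows i' hi')).1
            refine Finset.mem_sup.2 ⟨Row b n i', Finset.mem_erase.2 ⟨Row_ne_Col ha hab, hrz⟩, ?_⟩
            exact (mem_Row b).2 ⟨j, hj.1, rfl⟩
          · exact Finset.mem_sup.2 ⟨A', Finset.mem_erase.2 ⟨hAe, hA'z⟩, hxA'⟩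
    · intro A hA
      obtain ⟨i, hi, rfl⟩ := Finset.mem_image.1 hA
      exact hrows i (Finset.mem_range.1 hi)
  · right
    push_neg at hrows
    obtain ⟨i1, hi1, hi1z⟩ := hrows
    have hcols : ∀ j, j < b n → Col a n j ∈ zn := by
      intro j hj
      have hx : cell n i1 j ∈ X := hfull ((mem_Grid a b).2 ⟨i1, j, hi1, hj, rfl⟩)
      obtain ⟨A, hAzn, hxA⟩ := zn_cover ha hab hq hsup (n := n) hx (by simp)
      rcases zn_classify ha hab hq hsup hAzn with ⟨i', hi', rfl⟩ | ⟨j', hj', rfl⟩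
      · obtain ⟨j'', _, hc⟩ := (mem_Row b).1 hxA
        obtain ⟨-, rfl, -⟩ := cell_inj hc
        exact absurd hAzn hi1z
      · obtain ⟨i'', _, hc⟩ := (mem_Col a).1 hxA
        obtain ⟨-, -, rfl⟩ := cell_inj hc
        exact hAzn
    apply Finset.Subset.antisymm
    · intro A hA
      rcases zn_classify ha hab hq hsup hA with ⟨i, hi, rfl⟩ | ⟨j, hj, rfl⟩
      · -- a row occurs in `zn` together with all columns: contradicts minimality
        exfalso
        rw [Rset, Finset.mem_filter, Finset.mem_range] at hi
        have hrz : Row b n i ∈ z := (Finset.mem_filter.1 hA).1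
        have hw : z.erase (Row b n i) ⊂ z := Finset.erase_ssubset hrz
        apply hmin _ hw
        apply le_antisymm
        · exact hsup ▸ Finset.sup_mono (Finset.erase_subset _ _)
        · intro x hx
          obtain ⟨A', hA'z, hxA'⟩ := cover_of_mem hsup hx
          by_cases hAe : A' = Row b n i
          · subst hAe
            obtain ⟨j', hj', rfl⟩ := (mem_Row b).1 hxA'
            have hcz : Col a n j' ∈ z := (Finset.mem_filter.1 (hcols j' hj')).1
            refine Finset.mem_sup.2 ⟨Col a n j',
              Finset.mem_erase.2 ⟨Ne.symm (Row_ne_Col ha hab), hcz⟩, ?_⟩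
            exact (mem_Col a).2 ⟨i, hi.1, rfl⟩
          · exact Finset.mem_sup.2 ⟨A', Finset.mem_erase.2 ⟨hAe, hA'z⟩, hxA'⟩
      · rw [Cset, Finset.mem_filter] at hj
        exact Finset.mem_image_of_mem _ hj.1
    · intro A hA
      obtain ⟨j, hj, rfl⟩ := Finset.mem_image.1 hA
      exact hcols j (Finset.mem_range.1 hj)

end Cover2

section Cards

variable (ha : ∀ n, 2 ≤ a n) (hab : ∀ n, a n ≤ b n)
include ha hab

lemma Row_injective (n : ℕ) : Function.Injective (Row b n) := by
  intro i i' h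
  have h0 : cell n i 0 ∈ Row b n i' := h ▸ (mem_Row b).2 ⟨0, by have := btwo ha hab n; omega, rfl⟩
  obtain ⟨j, _, hc⟩ := (mem_Row b).1 h0
  exact (cell_inj hc).2.1

lemma Col_injective (n : ℕ) : Function.Injective (Col a n) := by
  intro j j' h
  have h0 : cell n 0 j ∈ Col a n j' := h ▸ (mem_Col a).2 ⟨0, by have := ha n; omega, rfl⟩
  obtain ⟨i, _, hc⟩ := (mem_Col a).1 h0
  exact (cell_inj hc).2.2

lemma card_rows_cols_union (s t : Finset ℕ) (n : ℕ) :
    ((s.image (Row b n)) ∪ (t.image (Col a n))).card = s.card + t.card := by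
  rw [Finset.card_union_of_disjoint, Finset.card_image_of_injective _ (Row_injective ha hab n),
    Finset.card_image_of_injective _ (Col_injective ha hab n)]
  refine Finset.disjoint_left.2 fun A hA hA' => ?_
  obtain ⟨i, _, rfl⟩ := Finset.mem_image.1 hA
  obtain ⟨j, _, hc⟩ := Finset.mem_image.1 hA'
  exact Row_ne_Col ha hab hc.symm

variable {X : Finset ℕ} {z : Finset (Finset ℕ)}
  (hq : ∀ A ∈ z, A ∈ Q a b) (hsup : z.sup id = X)
  (hmin : ∀ w, w ⊂ z → w.sup id ≠ X)
include hq hsup hmin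

lemma zn_card_bounds (n : ℕ) :
    mcard a b X n ≤ (z.filter (fun A => qidx A = n)).card ∧
      (z.filter (fun A => qidx A = n)).card ≤ Mcard a b X n := by
  by_cases hfull : Grid a b n ⊆ X
  · rw [mcard, Mcard, if_pos hfull, if_pos hfull]
    rcases zn_eq_full ha hab hq hsup hmin hfull with h | h <;> rw [h]
    · rw [Finset.card_image_of_injective _ (Row_injective ha hab n), Finset.card_range]
      exact ⟨le_refl _, hab n⟩
    · rw [Finset.card_image_of_injective _ (Col_injective ha hab n), Finset.card_range]
      exact ⟨hab n, le_refl _⟩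
  · rw [zn_eq_nonfull ha hab hq hsup hfull, card_rows_cols_union ha hab,
      mcard, Mcard, if_neg hfull, if_neg hfull]
    exact ⟨le_refl _, le_refl _⟩

omit hmin in
lemma card_z_fiberwise : z.card = ∑ n ∈ NX X, (z.filter (fun A => qidx A = n)).card := by
  apply Finset.card_eq_sum_card_fiberwise
  intro A hA
  have hAQ := hq A hA
  obtain ⟨x, hx⟩ := quark_nonempty ha hab hAQ
  have hxX : x ∈ X := sub_of_mem_z hsup hA hx
  have : qidx A = gIdx x := by
    rcases hAQ with ⟨n', i, hi, rfl⟩ | ⟨n', j, hj, rfl⟩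
    · rw [qidx_Row ha hab, gIdx_of_mem_Row hx]
    · rw [qidx_Col ha hab, gIdx_of_mem_Col hx]
  rw [NX, this]
  exact Finset.mem_image_of_mem _ hxX

lemma card_z_bounds :
    (∑ n ∈ NX X, mcard a b X n) ≤ z.card ∧
      z.card ≤ ∑ n ∈ NX X, Mcard a b X n := by
  rw [card_z_fiberwise ha hab hq hsup]
  constructor
  · exact Finset.sum_le_sum fun n _ => (zn_card_bounds ha hab hq hsup hmin n).1
  · exact Finset.sum_le_sum fun n _ => (zn_card_bounds ha hab hq hsup hmin n).2

end Cards

section Construct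

variable (ha : ∀ n, 2 ≤ a n) (hab : ∀ n, a n ≤ b n)

/-- minimality criterion: every quark of `z` owns a private cell of `X`. -/
lemma min_of_witness {X : Finset ℕ} {z : Finset (Finset ℕ)}
    (hwit : ∀ A ∈ z, ∃ x, x ∈ A ∧ x ∈ X ∧ ∀ B ∈ z, x ∈ B → B = A) :
    ∀ w, w ⊂ z → w.sup id ≠ X := by
  intro w hw hsupw
  obtain ⟨A, hAz, hAw⟩ := Finset.exists_of_ssubset hw
  obtain ⟨x, hxA, hxX, huniq⟩ := hwit A hAz
  have : x ∈ w.sup id := hsupw ▸ hxX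
  obtain ⟨B, hBw, hxB⟩ := Finset.mem_sup.1 this
  exact hAw ((huniq B (hw.subset hBw) hxB) ▸ hBw)

include ha hab

lemma rowsFact (n : ℕ) :
    IsFactorization (S a b) (Grid a b n) ((Finset.range (a n)).image (Row b n)) ∧
      ((Finset.range (a n)).image (Row b n)).card = a n := by
  have hq : ∀ A ∈ (Finset.range (a n)).image (Row b n), A ∈ Q a b := by
    intro A hA
    obtain ⟨i, hi, rfl⟩ := Finset.mem_image.1 hA
    exact Or.inl ⟨n, i, Finset.mem_range.1 hi, rfl⟩
  have hsup : ((Finset.range (a n)).image (Row b n)).sup id = Grid a b n := by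
    apply le_antisymm
    · apply Finset.sup_le
      intro A hA
      obtain ⟨i, hi, rfl⟩ := Finset.mem_image.1 hA
      exact Row_subset_Grid (Finset.mem_range.1 hi)
    · intro x hx
      obtain ⟨i, j, hi, hj, rfl⟩ := (mem_Grid a b).1 hx
      exact Finset.mem_sup.2 ⟨Row b n i, Finset.mem_image_of_mem _ (Finset.mem_range.2 hi),
        (mem_Row b).2 ⟨j, hj, rfl⟩⟩
  refine ⟨⟨fun A hA => (isQuark_iff ha hab).2 (hq A hA), hsup, min_of_witness ?_⟩,
    by rw [Finset.card_image_of_injective _ (Row_injective ha hab n), Finset.card_range]⟩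
  intro A hA
  obtain ⟨i, hi, rfl⟩ := Finset.mem_image.1 hA
  refine ⟨cell n i 0, (mem_Row b).2 ⟨0, by have := btwo ha hab n; omega, rfl⟩,
    hsup ▸ Finset.le_sup (f := id) hA ((mem_Row b).2 ⟨0, by have := btwo ha hab n; omega, rfl⟩),
    fun B hB hxB => ?_⟩
  obtain ⟨i', hi', rfl⟩ := Finset.mem_image.1 hB
  obtain ⟨j', _, hc⟩ := (mem_Row b).1 hxB
  obtain ⟨-, rfl, -⟩ := cell_inj hc
  rfl

lemma colsFact (n : ℕ) :
    IsFactorization (S a b) (Grid a b n) ((Finset.range (b n)).image (Col a n)) ∧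
      ((Finset.range (b n)).image (Col a n)).card = b n := by
  have hq : ∀ A ∈ (Finset.range (b n)).image (Col a n), A ∈ Q a b := by
    intro A hA
    obtain ⟨j, hj, rfl⟩ := Finset.mem_image.1 hA
    exact Or.inr ⟨n, j, Finset.mem_range.1 hj, rfl⟩
  have hsup : ((Finset.range (b n)).image (Col a n)).sup id = Grid a b n := by
    apply le_antisymm
    · apply Finset.sup_le
      intro A hA
      obtain ⟨j, hj, rfl⟩ := Finset.mem_image.1 hA
      exact Col_subset_Grid (Finset.mem_range.1 hj)
    · intro x hx
      obtain ⟨i, j, hi, hj, rfl⟩ := (mem_Grid a b).1 hx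
      exact Finset.mem_sup.2 ⟨Col a n j, Finset.mem_image_of_mem _ (Finset.mem_range.2 hj),
        (mem_Col a).2 ⟨i, hi, rfl⟩⟩
  refine ⟨⟨fun A hA => (isQuark_iff ha hab).2 (hq A hA), hsup, min_of_witness ?_⟩,
    by rw [Finset.card_image_of_injective _ (Col_injective ha hab n), Finset.card_range]⟩
  intro A hA
  obtain ⟨j, hj, rfl⟩ := Finset.mem_image.1 hA
  refine ⟨cell n 0 j, (mem_Col a).2 ⟨0, by have := ha n; omega, rfl⟩,
    hsup ▸ Finset.le_sup (f := id) hA ((mem_Col a).2 ⟨0, by have := ha n; omega, rfl⟩),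
    fun B hB hxB => ?_⟩
  obtain ⟨j', hj', rfl⟩ := Finset.mem_image.1 hB
  obtain ⟨i', _, hc⟩ := (mem_Col a).1 hxB
  obtain ⟨-, -, rfl⟩ := cell_inj hc
  rfl

lemma grid_mem_S (n : ℕ) : Grid a b n ∈ S a b :=
  ⟨(Finset.range (a n)).image (Row b n), fun A hA => by
    obtain ⟨i, hi, rfl⟩ := Finset.mem_image.1 hA
    exact Or.inl ⟨n, i, Finset.mem_range.1 hi, rfl⟩, (rowsFact ha hab n).1.2.1⟩

lemma grid_nonempty (n : ℕ) : (Grid a b n).Nonempty :=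
  ⟨cell n 0 0, (mem_Grid a b).2 ⟨0, 0, by have := ha n; omega, by have := btwo ha hab n; omega, rfl⟩⟩

end Construct

section Exists

variable (ha : ∀ n, 2 ≤ a n) (hab : ∀ n, a n ≤ b n)

variable (a b) in
/-- per-grid choices of quarks for the canonical factorization. -/
def pick (X : Finset ℕ) (n : ℕ) : Finset (Finset ℕ) :=
  if Grid a b n ⊆ X then (Finset.range (a n)).image (Row b n)
  else (Rset a b X n).image (Row b n) ∪ (Cset a b X n).image (Col a n)

lemma pick_classify {X : Finset ℕ} {n : ℕ} {A : Finset ℕ} (hA : A ∈ pick a b X n) :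
    (∃ i, i < a n ∧ A = Row b n i) ∨ (∃ j, j < b n ∧ Col a n j ⊆ X ∧ A = Col a n j) := by
  rw [pick] at hA
  by_cases hfull : Grid a b n ⊆ X
  · rw [if_pos hfull] at hA
    obtain ⟨i, hi, rfl⟩ := Finset.mem_image.1 hA
    exact Or.inl ⟨i, Finset.mem_range.1 hi, rfl⟩
  · rw [if_neg hfull] at hA
    rcases Finset.mem_union.1 hA with h | h
    · obtain ⟨i, hi, rfl⟩ := Finset.mem_image.1 h
      rw [Rset, Finset.mem_filter, Finset.mem_range] at hi
      exact Or.inl ⟨i, hi.1, rfl⟩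
    · obtain ⟨j, hj, rfl⟩ := Finset.mem_image.1 h
      rw [Cset, Finset.mem_filter, Finset.mem_range] at hj
      exact Or.inr ⟨j, hj.1, hj.2, rfl⟩

lemma pick_sub {X : Finset ℕ} (hX : X ∈ S a b) {n : ℕ} (hn : n ∈ NX X) {A : Finset ℕ}
    (hA : A ∈ pick a b X n) : A ⊆ X := by
  rw [pick] at hA
  by_cases hfull : Grid a b n ⊆ X
  · rw [if_pos hfull] at hA
    obtain ⟨i, hi, rfl⟩ := Finset.mem_image.1 hA
    exact (Row_subset_Grid (Finset.mem_range.1 hi)).trans hfull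
  · rw [if_neg hfull] at hA
    rcases Finset.mem_union.1 hA with h | h
    · obtain ⟨i, hi, rfl⟩ := Finset.mem_image.1 h
      exact (Finset.mem_filter.1 hi).2
    · obtain ⟨j, hj, rfl⟩ := Finset.mem_image.1 h
      exact (Finset.mem_filter.1 hj).2

include ha hab

lemma exists_fact {X : Finset ℕ} (hX : X ∈ S a b) :
    IsFactorization (S a b) X ((NX X).biUnion (pick a b X)) := by
  set z0 := (NX X).biUnion (pick a b X) with hz0
  have hmem : ∀ A ∈ z0, ∃ n ∈ NX X, A ∈ pick a b X n := by
    intro A hA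
    exact Finset.mem_biUnion.1 hA
  have hQ : ∀ A ∈ z0, A ∈ Q a b := by
    intro A hA
    obtain ⟨n, hn, hp⟩ := hmem A hA
    rcases pick_classify hp with ⟨i, hi, rfl⟩ | ⟨j, hj, _, rfl⟩
    · exact Or.inl ⟨n, i, hi, rfl⟩
    · exact Or.inr ⟨n, j, hj, rfl⟩
  have hsup : z0.sup id = X := by
    apply le_antisymm
    · apply Finset.sup_le
      intro A hA
      obtain ⟨n, hn, hp⟩ := hmem A hA
      exact pick_sub hX hn hp
    · intro x hx
      obtain ⟨A, hAQ, hxA, hAX⟩ := exists_quark_of_mem_S hX hx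
      rcases hAQ with ⟨n, i, hi, rfl⟩ | ⟨n, j, hj, rfl⟩
      · obtain ⟨j, hj, rfl⟩ := (mem_Row b).1 hxA
        have hnx : n ∈ NX X := by
          have := Finset.mem_image_of_mem gIdx hx
          simpa [NX] using this
        by_cases hfull : Grid a b n ⊆ X
        · refine Finset.mem_sup.2 ⟨Row b n i, Finset.mem_biUnion.2 ⟨n, hnx, ?_⟩,
            (mem_Row b).2 ⟨j, hj, rfl⟩⟩
          rw [pick, if_pos hfull]
          exact Finset.mem_image_of_mem _ (Finset.mem_range.2 hi)
        · refine Finset.mem_sup.2 ⟨Row b n i, Finset.mem_biUnion.2 ⟨n, hnx, ?_⟩,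
            (mem_Row b).2 ⟨j, hj, rfl⟩⟩
          rw [pick, if_neg hfull]
          exact Finset.mem_union_left _ (Finset.mem_image_of_mem _
            (Finset.mem_filter.2 ⟨Finset.mem_range.2 hi, hAX⟩))
      · obtain ⟨i, hi, rfl⟩ := (mem_Col a).1 hxA
        have hnx : n ∈ NX X := by
          have := Finset.mem_image_of_mem gIdx hx
          simpa [NX] using this
        by_cases hfull : Grid a b n ⊆ X
        · refine Finset.mem_sup.2 ⟨Row b n i, Finset.mem_biUnion.2 ⟨n, hnx, ?_⟩,
            (mem_Row b).2 ⟨j, hj, rfl⟩⟩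
          rw [pick, if_pos hfull]
          exact Finset.mem_image_of_mem _ (Finset.mem_range.2 hi)
        · refine Finset.mem_sup.2 ⟨Col a n j, Finset.mem_biUnion.2 ⟨n, hnx, ?_⟩,
            (mem_Col a).2 ⟨i, hi, rfl⟩⟩
          rw [pick, if_neg hfull]
          exact Finset.mem_union_right _ (Finset.mem_image_of_mem _
            (Finset.mem_filter.2 ⟨Finset.mem_range.2 hj, hAX⟩))
  refine ⟨fun A hA => (isQuark_iff ha hab).2 (hQ A hA), hsup, min_of_witness ?_⟩
  intro A hA
  obtain ⟨n, hn, hp⟩ := hmem A hA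
  -- find the private cell
  by_cases hfull : Grid a b n ⊆ X
  · rw [pick, if_pos hfull] at hp
    obtain ⟨i, hi, rfl⟩ := Finset.mem_image.1 hp
    refine ⟨cell n i 0, (mem_Row b).2 ⟨0, by have := btwo ha hab n; omega, rfl⟩,
      hfull ((mem_Grid a b).2 ⟨i, 0, Finset.mem_range.1 hi, by have := btwo ha hab n; omega, rfl⟩),
      fun B hB hxB => ?_⟩
    obtain ⟨n', hn', hp'⟩ := hmem B hB
    have hgn : n' = n := by
      rcases pick_classify hp' with ⟨i', _, rfl⟩ | ⟨j', _, _, rfl⟩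
      · rw [← gIdx_of_mem_Row hxB, gIdx_cell]
      · rw [← gIdx_of_mem_Col hxB, gIdx_cell]
    subst hgn
    rw [pick, if_pos hfull] at hp'
    obtain ⟨i', _, rfl⟩ := Finset.mem_image.1 hp'
    obtain ⟨j', _, hc⟩ := (mem_Row b).1 hxB
    obtain ⟨-, rfl, -⟩ := cell_inj hc
    rfl
  · rw [pick, if_neg hfull] at hp
    rcases Finset.mem_union.1 hp with h | h
    · obtain ⟨i, hi, rfl⟩ := Finset.mem_image.1 h
      rw [Rset, Finset.mem_filter, Finset.mem_range] at hi
      have hj0 : ∃ j0, j0 < b n ∧ ¬ Col a n j0 ⊆ X := by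
        by_contra hcon
        push_neg at hcon
        exact hfull (grid_sub_of_cols fun j hj => hcon j hj)
      obtain ⟨j0, hj0, hj0X⟩ := hj0
      refine ⟨cell n i j0, (mem_Row b).2 ⟨j0, hj0, rfl⟩,
        hi.2 ((mem_Row b).2 ⟨j0, hj0, rfl⟩), fun B hB hxB => ?_⟩
      obtain ⟨n', hn', hp'⟩ := hmem B hB
      have hgn : n' = n := by
        rcases pick_classify hp' with ⟨i', _, rfl⟩ | ⟨j', _, _, rfl⟩
        · rw [← gIdx_of_mem_Row hxB, gIdx_cell]
        · rw [← gIdx_of_mem_Col hxB, gIdx_cell]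
      subst hgn
      rcases pick_classify hp' with ⟨i', _, rfl⟩ | ⟨j', _, hj'X, rfl⟩
      · obtain ⟨j'', _, hc⟩ := (mem_Row b).1 hxB
        obtain ⟨-, rfl, -⟩ := cell_inj hc
        rfl
      · obtain ⟨i'', _, hc⟩ := (mem_Col a).1 hxB
        obtain ⟨-, -, rfl⟩ := cell_inj hc
        exact absurd hj'X hj0X
    · obtain ⟨j, hj, rfl⟩ := Finset.mem_image.1 h
      rw [Cset, Finset.mem_filter, Finset.mem_range] at hj
      have hi0 : ∃ i0, i0 < a n ∧ ¬ Row b n i0 ⊆ X := by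
        by_contra hcon
        push_neg at hcon
        exact hfull (grid_sub_of_rows fun i hi => hcon i hi)
      obtain ⟨i0, hi0, hi0X⟩ := hi0
      refine ⟨cell n i0 j, (mem_Col a).2 ⟨i0, hi0, rfl⟩,
        hj.2 ((mem_Col a).2 ⟨i0, hi0, rfl⟩), fun B hB hxB => ?_⟩
      obtain ⟨n', hn', hp'⟩ := hmem B hB
      have hgn : n' = n := by
        rcases pick_classify hp' with ⟨i', _, rfl⟩ | ⟨j', _, _, rfl⟩
        · rw [← gIdx_of_mem_Row hxB, gIdx_cell]
        · rw [← gIdx_of_mem_Col hxB, gIdx_cell]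
      subst hgn
      rw [pick, if_neg hfull] at hp'
      rcases Finset.mem_union.1 hp' with h' | h'
      · obtain ⟨i', hi', rfl⟩ := Finset.mem_image.1 h'
        obtain ⟨j'', _, hc⟩ := (mem_Row b).1 hxB
        obtain ⟨-, rfl, -⟩ := cell_inj hc
        rw [Rset, Finset.mem_filter] at hi'
        exact absurd hi'.2 hi0X
      · obtain ⟨j', hj', rfl⟩ := Finset.mem_image.1 h'
        obtain ⟨i'', _, hc⟩ := (mem_Col a).1 hxB
        obtain ⟨-, -, rfl⟩ := cell_inj hc
        rfl

lemma factorizable_S : Factorizable (S a b) := by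
  intro X hX _
  exact ⟨_, exists_fact ha hab hX⟩

end Exists

section Elasticity

variable (a b) in
/-- the target elasticity value. -/
noncomputable def beta : ℝ≥0∞ := ⨆ n, (b n : ℝ≥0∞) / (a n : ℝ≥0∞)

variable (ha : ∀ n, 2 ≤ a n) (hab : ∀ n, a n ≤ b n)
include ha hab

lemma one_le_ratio (n : ℕ) : (1:ℝ≥0∞) ≤ (b n : ℝ≥0∞) / (a n : ℝ≥0∞) := by
  rw [ENNReal.le_div_iff_mul_le (Or.inl (by exact_mod_cast (by have := ha n; omega : a n ≠ 0)))
    (Or.inl (by simp))]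
  simpa using hab n

lemma one_le_beta : (1:ℝ≥0∞) ≤ beta a b := by
  rw [beta]
  exact le_trans (one_le_ratio ha hab 0) (le_iSup (fun n => (b n : ℝ≥0∞) / (a n : ℝ≥0∞)) 0)

lemma b_le_beta_mul_a (n : ℕ) : (b n : ℝ≥0∞) ≤ beta a b * (a n : ℝ≥0∞) := by
  have h1 : (b n : ℝ≥0∞) / (a n : ℝ≥0∞) ≤ beta a b := by
    rw [beta]
    exact le_iSup (fun n => (b n : ℝ≥0∞) / (a n : ℝ≥0∞)) n
  rwa [ENNReal.div_le_iff (by exact_mod_cast (by have := ha n; omega : a n ≠ 0)) (by simp)] at h1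

lemma card_pos_of_fact {X : Finset ℕ} (hXne : X ≠ ∅) {z : Finset (Finset ℕ)}
    (hz : z ∈ Factorizations (S a b) X) : 1 ≤ z.card := by
  rcases Finset.eq_empty_or_nonempty z with rfl | h
  · exact absurd hz.2.1 (by simpa using (Ne.symm hXne))
  · exact Finset.card_pos.2 h

lemma lengths_bounds {X : Finset ℕ} (hX : X ∈ S a b) {ℓ : ℕ}
    (hℓ : ℓ ∈ lengthsOf (S a b) X) :
    (∑ n ∈ NX X, mcard a b X n) ≤ ℓ ∧ ℓ ≤ ∑ n ∈ NX X, Mcard a b X n := by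
  obtain ⟨z, hz, rfl⟩ := hℓ
  obtain ⟨hzq, hzsup, hzmin⟩ := hz
  exact card_z_bounds ha hab (fun A hA => (isQuark_iff ha hab).1 (hzq A hA)) hzsup hzmin

lemma elasticityOf_le_beta {X : Finset ℕ} (hX : X ∈ S a b) (hXne : X ≠ ∅) :
    elasticityOf (S a b) X ≤ beta a b := by
  set m := ∑ n ∈ NX X, mcard a b X n with hm
  set M := ∑ n ∈ NX X, Mcard a b X n with hM
  have hne : (lengthsOf (S a b) X).Nonempty :=
    ⟨_, Set.mem_image_of_mem _ (exists_fact ha hab hX)⟩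
  have hsInf_mem : sInf (lengthsOf (S a b) X) ∈ lengthsOf (S a b) X := Nat.sInf_mem hne
  have hsInf_pos : 1 ≤ sInf (lengthsOf (S a b) X) := by
    obtain ⟨z, hz, hzc⟩ := hsInf_mem
    exact hzc ▸ card_pos_of_fact ha hab hXne hz
  have hm_le : m ≤ sInf (lengthsOf (S a b) X) := (lengths_bounds ha hab hX hsInf_mem).1
  have hMm : (M : ℝ≥0∞) ≤ beta a b * m := by
    have : ∀ n ∈ NX X, (Mcard a b X n : ℝ≥0∞) ≤ beta a b * (mcard a b X n : ℝ≥0∞) := by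
      intro n _
      by_cases hfull : Grid a b n ⊆ X
      · rw [Mcard, mcard, if_pos hfull, if_pos hfull]
        exact b_le_beta_mul_a ha hab n
      · rw [Mcard, mcard, if_neg hfull, if_neg hfull]
        exact le_mul_of_one_le_left (by positivity) (one_le_beta ha hab)
    calc (M : ℝ≥0∞) = ∑ n ∈ NX X, (Mcard a b X n : ℝ≥0∞) := by rw [hM]; push_cast; rfl
      _ ≤ ∑ n ∈ NX X, beta a b * (mcard a b X n : ℝ≥0∞) := Finset.sum_le_sum this
      _ = beta a b * ∑ n ∈ NX X, (mcard a b X n : ℝ≥0∞) := by rw [Finset.mul_sum]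
      _ = beta a b * (m : ℝ≥0∞) := by rw [hm]; push_cast; rfl
  rw [elasticityOf, ENNReal.div_le_iff
    (by exact_mod_cast (by omega : sInf (lengthsOf (S a b) X) ≠ 0)) (by simp)]
  refine le_trans (iSup₂_le fun ℓ hℓ => ?_) (le_trans hMm ?_)
  · exact_mod_cast Nat.cast_le.2 (lengths_bounds ha hab hX hℓ).2
  · have hcast : (m : ℝ≥0∞) ≤ ((sInf (lengthsOf (S a b) X) : ℕ) : ℝ≥0∞) := by
      exact_mod_cast hm_le
    exact mul_le_mul_right hcast _

end Elasticity

section Elasticity2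
variable (ha : ∀ n, 2 ≤ a n) (hab : ∀ n, a n ≤ b n)
include ha hab

lemma ratio_le_elasticityOf_grid (n : ℕ) :
    (b n : ℝ≥0∞) / (a n : ℝ≥0∞) ≤ elasticityOf (S a b) (Grid a b n) := by
  have hma : a n ∈ lengthsOf (S a b) (Grid a b n) :=
    ⟨_, (rowsFact ha hab n).1, (rowsFact ha hab n).2⟩
  have hmb : b n ∈ lengthsOf (S a b) (Grid a b n) :=
    ⟨_, (colsFact ha hab n).1, (colsFact ha hab n).2⟩
  rw [elasticityOf]
  refine ENNReal.div_le_div ?_ ?_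
  · exact le_iSup₂ (f := fun (ℓ : ℕ) (_ : ℓ ∈ lengthsOf (S a b) (Grid a b n)) => (ℓ : ℝ≥0∞))
      (b n) hmb
  · exact_mod_cast Nat.cast_le.2 (Nat.sInf_le hma)

lemma elasticity_eq_beta : elasticity (S a b) = beta a b := by
  apply le_antisymm
  · rw [elasticity]
    exact iSup₂_le fun X hX => elasticityOf_le_beta ha hab hX.1 hX.2
  · rw [beta, elasticity]
    refine iSup_le fun n => le_trans (ratio_le_elasticityOf_grid ha hab n) ?_
    exact le_iSup₂ (f := fun (X : Finset ℕ) (_ : X ∈ {X | X ∈ S a b ∧ X ≠ ∅}) =>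
        elasticityOf (S a b) X) (Grid a b n)
      ⟨grid_mem_S ha hab n, Finset.nonempty_iff_ne_empty.1 (grid_nonempty ha hab n)⟩

end Elasticity2

/-- the main construction lemma. -/
lemma main (ha : ∀ n, 2 ≤ a n) (hab : ∀ n, a n ≤ b n) :
    ∃ S : Set (Finset ℕ), IsBSL S ∧ Factorizable S ∧
      elasticity S = ⨆ n, (b n : ℝ≥0∞) / (a n : ℝ≥0∞) :=
  ⟨S a b, isBSL_S, factorizable_S ha hab, by rw [elasticity_eq_beta ha hab]; rfl⟩

end Stmt16


open scoped NNReal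

/-- For every extended nonnegative real `α ≥ 1` (including `α = ∞`),
there exists a factorizable Boolean sublattice whose elasticity equals `α`. -/
theorem stmt_16 (α : ℝ≥0∞) (hα : 1 ≤ α) :
    ∃ S : Set (Finset ℕ), IsBSL S ∧ Factorizable S ∧ elasticity S = α := by
  by_cases htop : α = ⊤
  · subst htop
    obtain ⟨S, h1, h2, h3⟩ := Stmt16.main (a := fun _ => 2) (b := fun n => 2*(n+1))
      (fun _ => le_refl 2) (fun n => by show 2 ≤ 2*(n+1); omega)
    refine ⟨S, h1, h2, h3.trans ?_⟩
    rw [eq_top_iff, ← ENNReal.iSup_natCast]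
    refine iSup_le fun n => le_trans ?_ (le_iSup _ n)
    rw [ENNReal.le_div_iff_mul_le (Or.inl (by norm_num)) (Or.inl (by norm_num))]
    push_cast
    rw [mul_comm]
    exact mul_le_mul_right (self_le_add_right _ _) 2
  · set c := α.toReal with hc
    have hc1 : (1:ℝ) ≤ c := by
      have := (ENNReal.toReal_le_toReal (by simp) htop).2 hα
      simpa using this
    set A : ℕ → ℕ := fun n => 2^(n+1) with hA
    set B : ℕ → ℕ := fun n => ⌊c * (A n : ℝ)⌋₊ with hB
    have hApos : ∀ n, 0 < (A n : ℝ) := fun n => by positivity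
    have haA : ∀ n, 2 ≤ A n := fun n => by
      calc 2 = 2^1 := rfl
      _ ≤ 2^(n+1) := Nat.pow_le_pow_right (by omega) (by omega)
    have habA : ∀ n, A n ≤ B n := fun n =>
      Nat.le_floor (le_mul_of_one_le_left (by positivity) hc1)
    obtain ⟨S, h1, h2, h3⟩ := Stmt16.main (a := A) (b := B) haA habA
    refine ⟨S, h1, h2, h3.trans ?_⟩
    have hterm : ∀ n, ((B n : ℕ) : ℝ≥0∞) / ((A n : ℕ) : ℝ≥0∞) =
        ENNReal.ofReal ((B n : ℝ) / (A n : ℝ)) := by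
      intro n
      rw [ENNReal.ofReal_div_of_pos (hApos n)]
      simp [ENNReal.ofReal_natCast]
    have hαof : α = ENNReal.ofReal c := (ENNReal.ofReal_toReal htop).symm
    apply le_antisymm
    · refine iSup_le fun n => ?_
      rw [hterm n, hαof]
      apply ENNReal.ofReal_le_ofReal
      rw [div_le_iff₀ (hApos n)]
      exact Nat.floor_le (by positivity)
    · apply ENNReal.le_of_forall_pos_le_add
      intro ε hε _
      obtain ⟨k, hk⟩ := exists_nat_gt (1/(ε:ℝ))
      have hn : 1/(ε:ℝ) < (A k : ℝ) := by
        refine hk.trans_le ?_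
        exact_mod_cast (Nat.lt_two_pow_self (n := k)).le.trans (Nat.pow_le_pow_right (by omega) (by omega))
      have hεpos : (0:ℝ) < (ε:ℝ) := hε
      have h1 : (1:ℝ) < (ε:ℝ) * (A k : ℝ) := by
        rw [div_lt_iff₀ hεpos] at hn
        linarith [hn]
      have h2 : c * (A k : ℝ) < (B k : ℝ) + 1 := by
        have := Nat.lt_floor_add_one (c * (A k : ℝ))
        exact_mod_cast this
      have hreal : c ≤ (B k : ℝ) / (A k : ℝ) + (ε:ℝ) := by
        have hstep : c ≤ ((B k : ℝ) + (ε:ℝ) * (A k : ℝ)) / (A k : ℝ) := by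
          rw [le_div_iff₀ (hApos k)]
          nlinarith [h1, h2]
        calc c ≤ ((B k : ℝ) + (ε:ℝ) * (A k : ℝ)) / (A k : ℝ) := hstep
          _ = (B k : ℝ) / (A k : ℝ) + (ε:ℝ) := by
            rw [add_div, mul_div_assoc, div_self (hApos k).ne', mul_one]
      calc α = ENNReal.ofReal c := hαof
        _ ≤ ENNReal.ofReal ((B k : ℝ) / (A k : ℝ) + (ε:ℝ)) := ENNReal.ofReal_le_ofReal hreal
        _ = ENNReal.ofReal ((B k : ℝ) / (A k : ℝ)) + ENNReal.ofReal (ε:ℝ) :=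
            ENNReal.ofReal_add (by positivity) (by positivity)
        _ = ((B k : ℕ) : ℝ≥0∞) / ((A k : ℕ) : ℝ≥0∞) + (ε : ℝ≥0∞) := by
            rw [hterm k, ENNReal.ofReal_coe_nnreal]
        _ ≤ (⨆ n, ((B n : ℕ) : ℝ≥0∞) / ((A n : ℕ) : ℝ≥0∞)) + (ε : ℝ≥0∞) :=
            add_le_add (le_iSup (fun n => ((B n : ℕ) : ℝ≥0∞) / ((A n : ℕ) : ℝ≥0∞)) k) le_rfl
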